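/- Let μ be a probability measure on ℝ^d, r > 0 and s ≥ 0. Then for every z ∈ ℝ^d, SD^r_s(z|μ) ∈ [0,1], and SD^r_s(z|μ) → 0 as ‖z‖ → ∞ (i.e., for every ε > 0 there is M > 0 such that ‖z‖ > M implies SD^r_s(z|μ) < ε). -/

import Mathlib

open MeasureTheory ENNReal

/-- The sigmoid function with scale `s`. -/
noncomputable def sig (s t : ℝ) : ℝ := 1 / (1 + Real.exp (-t / s))

/-- The sphere depth `SD^r_s(z|μ)`. For `s = 0` the sigmoid is replaced by the indicator
of `{x : ‖x − c‖ ≤ r}`, giving `SD^r_0(z|μ) = inf_{‖c−z‖=r} μ(B̄(c,r))`. -/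
noncomputable def SD (d : ℕ) (r s : ℝ) (z : EuclideanSpace ℝ (Fin d))
    (μ : Measure (EuclideanSpace ℝ (Fin d))) : ℝ :=
  if s = 0 then
    ⨅ c : Metric.sphere z r, (μ (Metric.closedBall (c : EuclideanSpace ℝ (Fin d)) r)).toReal
  else
    ⨅ c : Metric.sphere z r, ∫ x, sig s (r ^ 2 - ‖x - (c : EuclideanSpace ℝ (Fin d))‖ ^ 2) ∂μ

lemma sig_nonneg (s t : ℝ) : 0 ≤ sig s t := by
  unfold sig; positivity

lemma sig_le_one (s t : ℝ) : sig s t ≤ 1 := by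
  unfold sig
  rw [div_le_one (by positivity)]
  nlinarith [Real.exp_pos (-t / s)]

lemma sig_mono {s : ℝ} (hs : 0 < s) {t u : ℝ} (h : t ≤ u) : sig s t ≤ sig s u := by
  unfold sig
  have he : Real.exp (-u / s) ≤ Real.exp (-t / s) := by
    apply Real.exp_le_exp.2
    gcongr <;> linarith
  exact one_div_le_one_div_of_le (by positivity) (by linarith)

lemma sig_le_exp {s : ℝ} (hs : 0 < s) (t : ℝ) : sig s t ≤ Real.exp (t / s) := by
  unfold sig
  rw [div_le_iff₀ (by positivity)]
  have h1 : Real.exp (t / s) * Real.exp (-t / s) = 1 := by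
    rw [← Real.exp_add]; simp [neg_div]
  nlinarith [Real.exp_pos (t / s), Real.exp_pos (-t / s)]

lemma sig_continuous (s : ℝ) : Continuous (sig s) := by
  unfold sig
  refine Continuous.div continuous_const ?_ ?_
  · exact continuous_const.add (Real.continuous_exp.comp (continuous_neg.div_const s))
  · intro t; positivity

lemma sig_integrable {d : ℕ} (μ : Measure (EuclideanSpace ℝ (Fin d))) [IsFiniteMeasure μ]
    (s r : ℝ) (c : EuclideanSpace ℝ (Fin d)) :
    Integrable (fun x : EuclideanSpace ℝ (Fin d) => sig s (r ^ 2 - ‖x - c‖ ^ 2)) μ := by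
  have hc : Continuous fun x : EuclideanSpace ℝ (Fin d) => sig s (r ^ 2 - ‖x - c‖ ^ 2) :=
    (sig_continuous s).comp (by continuity)
  refine Integrable.mono' (integrable_const 1) hc.aestronglyMeasurable ?_
  filter_upwards with x
  rw [Real.norm_eq_abs, abs_of_nonneg (sig_nonneg _ _)]
  exact sig_le_one _ _

lemma tail_small {E : Type*} [NormedAddCommGroup E] [MeasurableSpace E] [OpensMeasurableSpace E]
    (μ : Measure E) [IsProbabilityMeasure μ] {δ : ℝ} (hδ : 0 < δ) :
    ∃ R > (0:ℝ), (μ (Metric.closedBall (0:E) R)ᶜ).toReal < δ := by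
  have h := tendsto_measure_iInter_atTop (μ := μ)
      (s := fun n : ℕ => (Metric.closedBall (0:E) n)ᶜ)
      (fun n => measurableSet_closedBall.compl.nullMeasurableSet)
      (fun m n hmn => Set.compl_subset_compl.2
        (Metric.closedBall_subset_closedBall (by exact_mod_cast hmn)))
      ⟨0, measure_ne_top μ _⟩
  have hempty : ⋂ n : ℕ, (Metric.closedBall (0:E) n)ᶜ = ∅ := by
    ext x
    simp only [Set.mem_iInter, Set.mem_compl_iff, Metric.mem_closedBall, dist_zero_right,
      not_le, Set.mem_empty_iff_false, iff_false, not_forall, not_lt]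
    obtain ⟨n, hn⟩ := exists_nat_ge ‖x‖
    exact ⟨n, hn⟩
  rw [hempty, measure_empty] at h
  obtain ⟨n, hn⟩ := (h.eventually_lt_const
    (show (0:ℝ≥0∞) < ENNReal.ofReal δ by simp [hδ])).exists
  refine ⟨(n : ℝ) + 1, by positivity, ?_⟩
  have hsub : (Metric.closedBall (0:E) ((n:ℝ) + 1))ᶜ ⊆ (Metric.closedBall (0:E) (n:ℝ))ᶜ :=
    Set.compl_subset_compl.2 (Metric.closedBall_subset_closedBall (by linarith))
  have hlt : μ (Metric.closedBall (0:E) ((n:ℝ) + 1))ᶜ < ENNReal.ofReal δ :=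
    lt_of_le_of_lt (measure_mono hsub) hn
  exact ENNReal.toReal_lt_of_lt_ofReal hlt

/-- The sphere depth takes values in `[0,1]` and vanishes at infinity. -/
theorem stmt_2 (d : ℕ) (μ : Measure (EuclideanSpace ℝ (Fin d))) [IsProbabilityMeasure μ]
    (r s : ℝ) (hr : 0 < r) (hs : 0 ≤ s) :
    (∀ z : EuclideanSpace ℝ (Fin d), SD d r s z μ ∈ Set.Icc (0 : ℝ) 1) ∧
    (∀ ε > (0 : ℝ), ∃ M > (0 : ℝ), ∀ z : EuclideanSpace ℝ (Fin d),
      M < ‖z‖ → SD d r s z μ < ε) := by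
  constructor
  · intro z
    unfold SD
    split_ifs with h0
    · constructor
      · exact Real.iInf_nonneg fun c => ENNReal.toReal_nonneg
      · rcases isEmpty_or_nonempty (Metric.sphere z r) with he | hne
        · simp
        · obtain ⟨c⟩ := hne
          refine ciInf_le_of_le ⟨0, ?_⟩ c ?_
          · rintro x ⟨c', rfl⟩; exact ENNReal.toReal_nonneg
          · have h1 : μ (Metric.closedBall (c : EuclideanSpace ℝ (Fin d)) r) ≤ 1 :=
              prob_le_one
            calc (μ (Metric.closedBall (c : EuclideanSpace ℝ (Fin d)) r)).toReal
                ≤ (1 : ℝ≥0∞).toReal := ENNReal.toReal_mono ENNReal.one_ne_top h1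
              _ = 1 := by simp
    · constructor
      · exact Real.iInf_nonneg fun c => integral_nonneg fun x => sig_nonneg _ _
      · rcases isEmpty_or_nonempty (Metric.sphere z r) with he | hne
        · simp
        · obtain ⟨c⟩ := hne
          refine ciInf_le_of_le ⟨0, ?_⟩ c ?_
          · rintro x ⟨c', rfl⟩; exact integral_nonneg fun x => sig_nonneg _ _
          · calc ∫ x, sig s (r ^ 2 - ‖x - (c : EuclideanSpace ℝ (Fin d))‖ ^ 2) ∂μ
                ≤ ∫ _, (1:ℝ) ∂μ := integral_mono (sig_integrable μ s r _)
                  (integrable_const 1) fun x => sig_le_one _ _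
              _ = 1 := by simp
  · intro ε hε
    by_cases h0 : s = 0
    · obtain ⟨R, hR, hRμ⟩ := tail_small μ hε
      refine ⟨R + 1, by linarith, fun z hz => ?_⟩
      have hznorm : 0 < ‖z‖ := by linarith
      set c : EuclideanSpace ℝ (Fin d) := (1 + r / ‖z‖) • z with hc
      have hcz : ‖c - z‖ = r := by
        have h1 : c - z = (r / ‖z‖) • z := by
          rw [hc]; module
        rw [h1, norm_smul, Real.norm_eq_abs, abs_of_nonneg (by positivity)]
        field_simp
      have hcnorm : ‖c‖ = ‖z‖ + r := by
        rw [hc, norm_smul, Real.norm_eq_abs, abs_of_nonneg (by positivity)]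
        field_simp
      unfold SD
      rw [if_pos h0]
      have hbdd : BddBelow (Set.range fun c : Metric.sphere z r =>
          (μ (Metric.closedBall (c : EuclideanSpace ℝ (Fin d)) r)).toReal) := by
        refine ⟨0, ?_⟩; rintro x ⟨c', rfl⟩; exact ENNReal.toReal_nonneg
      have hmem : c ∈ Metric.sphere z r := by
        simpa [Metric.mem_sphere, dist_eq_norm] using hcz
      refine lt_of_le_of_lt (ciInf_le hbdd ⟨c, hmem⟩) ?_
      have hsub : Metric.closedBall c r ⊆ (Metric.closedBall (0 : EuclideanSpace ℝ (Fin d)) R)ᶜ := by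
        intro x hx
        simp only [Metric.mem_closedBall, dist_eq_norm] at hx
        simp only [Set.mem_compl_iff, Metric.mem_closedBall, dist_zero_right, not_le]
        have h1 : ‖c‖ - ‖x‖ ≤ ‖x - c‖ := by
          have := norm_sub_norm_le c x
          rwa [norm_sub_rev] at this
        linarith [hcnorm ▸ h1]
      calc (μ (Metric.closedBall c r)).toReal
          ≤ (μ (Metric.closedBall (0 : EuclideanSpace ℝ (Fin d)) R)ᶜ).toReal :=
            ENNReal.toReal_mono (measure_ne_top μ _) (measure_mono hsub)
        _ < ε := hRμ
    · have hspos : 0 < s := lt_of_le_of_ne hs (Ne.symm h0)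
      obtain ⟨R, hR, hRμ⟩ := tail_small μ (half_pos hε)
      set T : ℝ := s * Real.log (ε / 2) - 1 with hT
      set r' : ℝ := Real.sqrt (max (r ^ 2 - T) 0) with hr'def
      have hr'nonneg : 0 ≤ r' := Real.sqrt_nonneg _
      have hr'sq : r' ^ 2 = max (r ^ 2 - T) 0 := Real.sq_sqrt (le_max_right _ _)
      have hsigsmall : sig s (r ^ 2 - r' ^ 2) < ε / 2 := by
        have ht : r ^ 2 - r' ^ 2 ≤ T := by
          rw [hr'sq]
          have := le_max_left (r ^ 2 - T) 0
          linarith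
        calc sig s (r ^ 2 - r' ^ 2) ≤ Real.exp ((r ^ 2 - r' ^ 2) / s) := sig_le_exp hspos _
          _ ≤ Real.exp (T / s) := Real.exp_le_exp.2 (by gcongr)
          _ < ε / 2 := by
            have hTs : T / s = Real.log (ε / 2) - 1 / s := by
              rw [hT]; field_simp
            rw [hTs]
            calc Real.exp (Real.log (ε / 2) - 1 / s) < Real.exp (Real.log (ε / 2)) := by
                  apply Real.exp_lt_exp.2
                  have : 0 < 1 / s := by positivity
                  linarith
              _ = ε / 2 := Real.exp_log (half_pos hε)
      refine ⟨R + |r' - r| + 1, by positivity, fun z hz => ?_⟩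
      have hznorm : 0 < ‖z‖ := by
        have := abs_nonneg (r' - r); linarith
      set c : EuclideanSpace ℝ (Fin d) := (1 + r / ‖z‖) • z with hc
      have hcz : ‖c - z‖ = r := by
        have h1 : c - z = (r / ‖z‖) • z := by
          rw [hc]; module
        rw [h1, norm_smul, Real.norm_eq_abs, abs_of_nonneg (by positivity)]
        field_simp
      have hcnorm : ‖c‖ = ‖z‖ + r := by
        rw [hc, norm_smul, Real.norm_eq_abs, abs_of_nonneg (by positivity)]
        field_simp
      unfold SD
      rw [if_neg h0]
      have hbdd : BddBelow (Set.range fun c : Metric.sphere z r =>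
          ∫ x, sig s (r ^ 2 - ‖x - (c : EuclideanSpace ℝ (Fin d))‖ ^ 2) ∂μ) := by
        refine ⟨0, ?_⟩; rintro x ⟨c', rfl⟩
        exact integral_nonneg fun x => sig_nonneg _ _
      have hmem : c ∈ Metric.sphere z r := by
        simpa [Metric.mem_sphere, dist_eq_norm] using hcz
      refine lt_of_le_of_lt (ciInf_le hbdd ⟨c, hmem⟩) ?_
      have hind : Integrable ((Metric.closedBall c r').indicator fun _ => (1:ℝ)) μ :=
        (integrable_const 1).indicator measurableSet_closedBall
      have hintle : ∫ x, sig s (r ^ 2 - ‖x - c‖ ^ 2) ∂μ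
          ≤ (μ (Metric.closedBall c r')).toReal + sig s (r ^ 2 - r' ^ 2) := by
        have hb : ∀ x, sig s (r ^ 2 - ‖x - c‖ ^ 2)
            ≤ (Metric.closedBall c r').indicator (fun _ => (1:ℝ)) x + sig s (r ^ 2 - r' ^ 2) := by
          intro x
          by_cases hx : x ∈ Metric.closedBall c r'
          · rw [Set.indicator_of_mem hx]
            linarith [sig_le_one s (r ^ 2 - ‖x - c‖ ^ 2), sig_nonneg s (r ^ 2 - r' ^ 2)]
          · rw [Set.indicator_of_notMem hx]
            simp only [Metric.mem_closedBall, not_le, dist_eq_norm] at hx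
            have hle : r ^ 2 - ‖x - c‖ ^ 2 ≤ r ^ 2 - r' ^ 2 := by
              nlinarith [norm_nonneg (x - c)]
            simpa using sig_mono hspos hle
        calc ∫ x, sig s (r ^ 2 - ‖x - c‖ ^ 2) ∂μ
            ≤ ∫ x, ((Metric.closedBall c r').indicator (fun _ => (1:ℝ)) x
                + sig s (r ^ 2 - r' ^ 2)) ∂μ :=
              integral_mono (sig_integrable μ s r c) (hind.add (integrable_const _)) hb
          _ = (μ (Metric.closedBall c r')).toReal + sig s (r ^ 2 - r' ^ 2) := by
              rw [integral_add hind (integrable_const _), integral_indicator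
                measurableSet_closedBall, setIntegral_const, integral_const]
              simp
              rfl
      have hsub : Metric.closedBall c r'
          ⊆ (Metric.closedBall (0 : EuclideanSpace ℝ (Fin d)) R)ᶜ := by
        intro x hx
        simp only [Metric.mem_closedBall, dist_eq_norm] at hx
        simp only [Set.mem_compl_iff, Metric.mem_closedBall, dist_zero_right, not_le]
        have h1 : ‖c‖ - ‖x‖ ≤ ‖x - c‖ := by
          have := norm_sub_norm_le c x
          rwa [norm_sub_rev] at this
        have habs : r' - r ≤ |r' - r| := le_abs_self _
        have h2 : ‖x‖ ≥ ‖z‖ + r - r' := by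
          have := hcnorm ▸ h1; linarith
        linarith
      have hμlt : (μ (Metric.closedBall c r')).toReal < ε / 2 :=
        lt_of_le_of_lt
          (ENNReal.toReal_mono (measure_ne_top μ _) (measure_mono hsub)) hRμ
      linarith
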